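/- Let V be a vector space over a field 𝔽, n ≥ 2, f an n-linear map on V, and ℬ a basis of V. For any two equivalence classes [e_i], [e_j] ∈ ℬ/∼ with [e_i] ≠ [e_j], one has f(V, …, V_{[e_i]} in slot k₁, …, V_{[e_j]} in slot k₂, …, V) = 0 for all k₁, k₂ ∈ {1,…,n} with k₁ ≠ k₂; that is, V_{[e_i]} and V_{[e_j]} are f-orthogonal. -/

import Mathlib

/- Common setting: `V` is a vector space over a field `𝔽`, and `f` is an
`n`-linear map on `V` where `n = m + 1 ≥ 2` (i.e. `1 ≤ m`).  Tuples of
length `n - 1 = m` index the last arguments of the set-valued map `F`. -/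

open scoped Classical

noncomputable section

variable {𝔽 V I : Type*}

/-- The set `V* = V \ {0}` of nonzero vectors. -/
abbrev Vstar (V : Type*) [Zero V] := {v : V // v ≠ 0}

/-- The disjoint union `ℬ ∪̇ ℬ̄`, encoded by indices: `(false, i)` stands for the
basis vector `e i ∈ ℬ` and `(true, i)` for the formal bar symbol `ē i ∈ ℬ̄`. -/
abbrev BSym (I : Type*) := Bool × I

/-- The bar-swap on `ℬ ∪̇ ℬ̄`. -/
def barSwap {I : Type*} (s : BSym I) : BSym I := (!s.1, s.2)

variable [Field 𝔽] [AddCommGroup V] [Module 𝔽 V] {m : ℕ}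

/-- A basis vector, as an element of `V*`. -/
def bstar (b : Module.Basis I 𝔽 V) (i : I) : Vstar V := ⟨b i, b.ne_zero i⟩

/-- The set-valued map `F : 𝒫(V*) × (ℬ ∪̇ ℬ̄)^{n-1} → 𝒫(V*)` associated to the
`n`-linear map `f` and the basis `b` (here `n = m + 1`). -/
def Fmap (b : Module.Basis I 𝔽 V) (f : MultilinearMap 𝔽 (fun _ : Fin (m + 1) => V) V)
    (U : Set (Vstar V)) (ξ : Fin m → BSym I) : Set (Vstar V) :=
  if ∀ t, (ξ t).1 = false then
    {w | ∃ (k : Fin (m + 1)) (σ : Equiv.Perm (Fin m)), ∃ u ∈ U,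
      f (Fin.insertNth k u.1 fun t => b (ξ (σ t)).2) = w.1}
  else if ∀ t, (ξ t).1 = true then
    {w | ∃ (k : Fin (m + 1)) (σ : Equiv.Perm (Fin m)), ∃ u ∈ U,
      f (Fin.insertNth k w.1 fun t => b (ξ (σ t)).2) = u.1}
  else ∅

/-- Iterated application of `F` along a list of `(n-1)`-tuples. -/
def iterF (b : Module.Basis I 𝔽 V) (f : MultilinearMap 𝔽 (fun _ : Fin (m + 1) => V) V) :
    Set (Vstar V) → List (Fin m → BSym I) → Set (Vstar V)
  | U, [] => U
  | U, X :: Xs => iterF b f (Fmap b f U X) Xs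

/-- `X` is a connection from `e i` to `e j`.  (Since `F(∅,⋯) = ∅`, the requirement
that all intermediate iterated images are nonempty is equivalent to the final
image containing `e j`.) -/
def IsConnection (b : Module.Basis I 𝔽 V) (f : MultilinearMap 𝔽 (fun _ : Fin (m + 1) => V) V)
    (i j : I) (X : List (Fin m → BSym I)) : Prop :=
  X ≠ [] ∧ bstar b j ∈ iterF b f {bstar b i} X

/-- `e i` is connected to `e j`. -/
def Connected (b : Module.Basis I 𝔽 V) (f : MultilinearMap 𝔽 (fun _ : Fin (m + 1) => V) V)
    (i j : I) : Prop :=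
  i = j ∨ ∃ X : List (Fin m → BSym I), IsConnection b f i j X

/-- Two subspaces `W₁, W₂` are `f`-orthogonal. -/
def FOrthogonal (f : MultilinearMap 𝔽 (fun _ : Fin (m + 1) => V) V)
    (W₁ W₂ : Submodule 𝔽 V) : Prop :=
  ∀ k₁ k₂ : Fin (m + 1), k₁ ≠ k₂ →
    ∀ v : Fin (m + 1) → V, v k₁ ∈ W₁ → v k₂ ∈ W₂ → f v = 0

/-- A subspace `W` is strongly `f`-invariant: `f(V,…,W,…,V) ⊆ W` for every slot. -/
def StronglyInvariant (f : MultilinearMap 𝔽 (fun _ : Fin (m + 1) => V) V)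
    (W : Submodule 𝔽 V) : Prop :=
  ∀ (k : Fin (m + 1)) (v : Fin (m + 1) → V), v k ∈ W → f v ∈ W

/-- `V_{[e i]}`, the span of the connection class of `e i`. -/
def classSpan (b : Module.Basis I 𝔽 V) (f : MultilinearMap 𝔽 (fun _ : Fin (m + 1) => V) V)
    (i : I) : Submodule 𝔽 V :=
  Submodule.span 𝔽 (⇑b '' {j | Connected b f i j})

/-- The projection `Π_{V_{[e c]}} : V → V_{[e c]}` relative to the decomposition
`V = ⊕ V_{[e i]}` (expressed through basis coordinates). -/
def projClass (b : Module.Basis I 𝔽 V) (f : MultilinearMap 𝔽 (fun _ : Fin (m + 1) => V) V)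
    (c : I) : V →ₗ[𝔽] V :=
  b.constr 𝔽 fun j => if Connected b f c j then b j else 0

/-- One step of the relation `≈`: the sum over `k₁ < k₂` of
`Π_{V_{[c]}}(f(V,…,V_{[d]},…,V_{[d]},…,V)) + Π_{V_{[d]}}(f(V,…,V_{[c]},…,V_{[c]},…,V))`
is nonzero. -/
def ApproxStep (b : Module.Basis I 𝔽 V) (f : MultilinearMap 𝔽 (fun _ : Fin (m + 1) => V) V)
    (c d : I) : Prop :=
  ∃ k₁ k₂ : Fin (m + 1), k₁ < k₂ ∧
    ((∃ v : Fin (m + 1) → V, v k₁ ∈ classSpan b f d ∧ v k₂ ∈ classSpan b f d ∧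
        projClass b f c (f v) ≠ 0) ∨
     (∃ v : Fin (m + 1) → V, v k₁ ∈ classSpan b f c ∧ v k₂ ∈ classSpan b f c ∧
        projClass b f d (f v) ≠ 0))

/-- `V_{[e i]} ≈ V_{[e j]}`: either they coincide (same connection class) or they are
linked by a finite chain of classes with nonvanishing projection sums. -/
def Approx (b : Module.Basis I 𝔽 V) (f : MultilinearMap 𝔽 (fun _ : Fin (m + 1) => V) V)
    (i j : I) : Prop :=
  Relation.ReflTransGen (fun c d => Connected b f c d ∨ ApproxStep b f c d) i j

/-- `⌢V_{[e i]} = ⊕_{V_{[e j]} ∈ [V_{[e i]}]} V_{[e j]}`. -/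
def hatSpan (b : Module.Basis I 𝔽 V) (f : MultilinearMap 𝔽 (fun _ : Fin (m + 1) => V) V)
    (i : I) : Submodule 𝔽 V :=
  Submodule.span 𝔽 (⇑b '' {j | Approx b f i j})

/-- Two decompositions of `V` as `f`-orthogonal direct sums of strongly `f`-invariant
subspaces (given as the sets of their summands) are isomorphic: there is a linear
automorphism `h` of `V` commuting with `f` carrying the summands of the first
bijectively onto the summands of the second. -/
def IsoDecomp (f : MultilinearMap 𝔽 (fun _ : Fin (m + 1) => V) V)
    (S T : Set (Submodule 𝔽 V)) : Prop :=
  ∃ h : V ≃ₗ[𝔽] V,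
    (∀ v : Fin (m + 1) → V, f (fun k => h (v k)) = h (f v)) ∧
    (Submodule.map (h : V →ₗ[𝔽] V)) '' S = T

/-- `X` is a strongly `f'`-invariant subspace of `W`, where `f'` is the restriction of
`f` to `W`: `f(W,…,X,…,W) ⊆ X` for every slot. -/
def SInvIn (f : MultilinearMap 𝔽 (fun _ : Fin (m + 1) => V) V)
    (W X : Submodule 𝔽 V) : Prop :=
  ∀ (k : Fin (m + 1)) (v : Fin (m + 1) → V), (∀ t, v t ∈ W) → v k ∈ X → f v ∈ X

/-- `W` is `f'`-simple, `f'` being the restriction of `f` to `W`: the restricted map is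
nonzero and the only strongly `f'`-invariant subspaces of `W` are `0` and `W`. -/
def SimpleIn (f : MultilinearMap 𝔽 (fun _ : Fin (m + 1) => V) V)
    (W : Submodule 𝔽 V) : Prop :=
  (∃ v : Fin (m + 1) → V, (∀ t, v t ∈ W) ∧ f v ≠ 0) ∧
  ∀ X : Submodule 𝔽 V, X ≤ W → SInvIn f W X → X = ⊥ ∨ X = W

/-- The annihilator of the restriction `f'` of `f` to `W`. -/
def annIn (f : MultilinearMap 𝔽 (fun _ : Fin (m + 1) => V) V)
    (W : Submodule 𝔽 V) : Set V :=
  {w | w ∈ W ∧ ∀ (k : Fin (m + 1)) (v : Fin (m + 1) → V),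
    (∀ t, v t ∈ W) → v k = w → f v = 0}

/-- `𝓘(w)`: the smallest strongly `f'`-invariant subspace of `W` containing `w`
(equivalently, the ideal of `(W, f')` generated by `w`). -/
def idealGenIn (f : MultilinearMap 𝔽 (fun _ : Fin (m + 1) => V) V)
    (W : Submodule 𝔽 V) (w : V) : Submodule 𝔽 V :=
  sInf {X : Submodule 𝔽 V | X ≤ W ∧ SInvIn f W X ∧ w ∈ X}

/-- `S` is an `i`-division basis of `W` with respect to the restriction `f'` of `f`:
whenever `c ∈ S`, `b₁, …, b_{n-1} ∈ W` and `f'(b₁,…,c,…,b_{n-1}) = w ≠ 0` with `c` in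
some slot `k`, then `c, b₁, …, b_{n-1} ∈ 𝓘(w)`. -/
def IDivisionBasisIn (f : MultilinearMap 𝔽 (fun _ : Fin (m + 1) => V) V)
    (W : Submodule 𝔽 V) (S : Set V) : Prop :=
  ∀ c ∈ S, ∀ (k : Fin (m + 1)) (v : Fin (m + 1) → V),
    (∀ t, v t ∈ W) → v k = c → f v ≠ 0 → ∀ t, v t ∈ idealGenIn f W (f v)

lemma Fmap_mono (b : Module.Basis I 𝔽 V) (f : MultilinearMap 𝔽 (fun _ : Fin (m + 1) => V) V)
    {U U' : Set (Vstar V)} (h : U ⊆ U') (ξ : Fin m → BSym I) :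
    Fmap b f U ξ ⊆ Fmap b f U' ξ := by
  unfold Fmap
  split_ifs with h1 h2
  · rintro w ⟨k, σ, u, hu, he⟩; exact ⟨k, σ, u, h hu, he⟩
  · rintro w ⟨k, σ, u, hu, he⟩; exact ⟨k, σ, u, h hu, he⟩
  · exact Set.Subset.rfl

lemma iterF_mono (b : Module.Basis I 𝔽 V) (f : MultilinearMap 𝔽 (fun _ : Fin (m + 1) => V) V) :
    ∀ (X : List (Fin m → BSym I)) {U U' : Set (Vstar V)}, U ⊆ U' →
      iterF b f U X ⊆ iterF b f U' X := by
  intro X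
  induction X with
  | nil => intro U U' h; exact h
  | cons ξ Xs ih => intro U U' h; exact ih (Fmap_mono b f h ξ)

lemma iterF_append (b : Module.Basis I 𝔽 V) (f : MultilinearMap 𝔽 (fun _ : Fin (m + 1) => V) V)
    (X Y : List (Fin m → BSym I)) :
    ∀ U, iterF b f U (X ++ Y) = iterF b f (iterF b f U X) Y := by
  induction X with
  | nil => intro U; rfl
  | cons ξ Xs ih => intro U; simp only [List.cons_append, iterF]; exact ih _

lemma Fmap_rev (hm : 1 ≤ m) (b : Module.Basis I 𝔽 V)
    (f : MultilinearMap 𝔽 (fun _ : Fin (m + 1) => V) V)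
    {U : Set (Vstar V)} {ξ : Fin m → BSym I} {w : Vstar V}
    (hw : w ∈ Fmap b f U ξ) :
    ∃ u ∈ U, u ∈ Fmap b f {w} (barSwap ∘ ξ) := by
  have t0 : Fin m := ⟨0, hm⟩
  unfold Fmap at hw ⊢
  split_ifs at hw with h1 h2
  · obtain ⟨k, σ, u, hu, he⟩ := hw
    refine ⟨u, hu, ?_⟩
    rw [if_neg (fun hall => by simpa [barSwap, h1 t0] using hall t0),
      if_pos (fun t => by simp [barSwap, h1 t])]
    exact ⟨k, σ, w, rfl, by simpa [barSwap] using he⟩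
  · obtain ⟨k, σ, u, hu, he⟩ := hw
    refine ⟨u, hu, ?_⟩
    rw [if_pos (fun t => by simp [barSwap, h2 t])]
    exact ⟨k, σ, w, rfl, by simpa [barSwap] using he⟩
  · exact absurd hw (Set.notMem_empty w)

lemma iterF_rev (hm : 1 ≤ m) (b : Module.Basis I 𝔽 V)
    (f : MultilinearMap 𝔽 (fun _ : Fin (m + 1) => V) V) :
    ∀ (X : List (Fin m → BSym I)) (U : Set (Vstar V)) (w : Vstar V),
      w ∈ iterF b f U X →
      ∃ u ∈ U, u ∈ iterF b f {w} ((X.map (fun ξ => barSwap ∘ ξ)).reverse) := by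
  intro X
  induction X with
  | nil => intro U w hw; exact ⟨w, hw, rfl⟩
  | cons ξ Xs ih =>
    intro U w hw
    obtain ⟨u', hu', hmem⟩ := ih (Fmap b f U ξ) w hw
    obtain ⟨u, hu, hstep⟩ := Fmap_rev hm b f hu'
    refine ⟨u, hu, ?_⟩
    have hL : ((ξ :: Xs).map (fun ξ => barSwap ∘ ξ)).reverse
        = (Xs.map (fun ξ => barSwap ∘ ξ)).reverse ++ [barSwap ∘ ξ] := by simp
    rw [hL, iterF_append]
    have := Fmap_mono b f (Set.singleton_subset_iff.2 hmem) (barSwap ∘ ξ) hstep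
    simpa [iterF] using this

lemma connected_symm (hm : 1 ≤ m) (b : Module.Basis I 𝔽 V)
    (f : MultilinearMap 𝔽 (fun _ : Fin (m + 1) => V) V) {i j : I}
    (h : Connected b f i j) : Connected b f j i := by
  rcases h with rfl | ⟨X, hne, hmem⟩
  · exact Or.inl rfl
  · obtain ⟨u, hu, hmem'⟩ := iterF_rev hm b f X _ _ hmem
    rw [Set.mem_singleton_iff] at hu
    subst hu
    exact Or.inr ⟨_, by simp [hne], hmem'⟩

lemma connected_trans (b : Module.Basis I 𝔽 V)
    (f : MultilinearMap 𝔽 (fun _ : Fin (m + 1) => V) V) {i j k : I}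
    (h1 : Connected b f i j) (h2 : Connected b f j k) : Connected b f i k := by
  rcases h1 with rfl | ⟨X, hXne, hX⟩
  · exact h2
  rcases h2 with rfl | ⟨Y, hYne, hY⟩
  · exact Or.inr ⟨X, hXne, hX⟩
  refine Or.inr ⟨X ++ Y, by simp [hXne], ?_⟩
  rw [iterF_append]
  exact iterF_mono b f Y (Set.singleton_subset_iff.2 hX) hY

lemma connected_of_ne_zero (hm : 1 ≤ m) (b : Module.Basis I 𝔽 V)
    (f : MultilinearMap 𝔽 (fun _ : Fin (m + 1) => V) V)
    (k₁ k₂ : Fin (m + 1)) (r : Fin (m + 1) → I)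
    (hfz : f (fun t => b (r t)) ≠ 0) :
    Connected b f (r k₁) (r k₂) := by
  set w : Vstar V := ⟨f (fun t => b (r t)), hfz⟩ with hwdef
  set ξ₁ : Fin m → BSym I := fun t => (false, r (k₁.succAbove t)) with hξ₁
  set ξ₂ : Fin m → BSym I := fun t => (true, r (k₂.succAbove t)) with hξ₂
  have key : ∀ k : Fin (m + 1),
      f (Fin.insertNth k (b (r k)) (fun t => b (r (k.succAbove t)))) = w.1 := by
    intro k
    congr 1
    exact Fin.insertNth_self_removeNth k (fun t => b (r t))
  have h1 : w ∈ Fmap b f {bstar b (r k₁)} ξ₁ := by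
    unfold Fmap
    rw [if_pos (fun t => rfl)]
    exact ⟨k₁, 1, bstar b (r k₁), rfl, key k₁⟩
  have h2 : bstar b (r k₂) ∈ Fmap b f {w} ξ₂ := by
    unfold Fmap
    rw [if_neg (fun hall => by simpa [hξ₂] using hall ⟨0, hm⟩),
      if_pos (fun t => rfl)]
    exact ⟨k₂, 1, w, rfl, key k₂⟩
  refine Or.inr ⟨[ξ₁, ξ₂], by simp, ?_⟩
  show bstar b (r k₂) ∈ Fmap b f (Fmap b f {bstar b (r k₁)} ξ₁) ξ₂
  exact Fmap_mono b f (Set.singleton_subset_iff.2 h1) ξ₂ h2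


/-- distinct classes give `f`-orthogonal spans. -/
theorem stmt5 (hm : 1 ≤ m) (b : Module.Basis I 𝔽 V)
    (f : MultilinearMap 𝔽 (fun _ : Fin (m + 1) => V) V)
    (i j : I) (h : ¬ Connected b f i j) :
    FOrthogonal f (classSpan b f i) (classSpan b f j) := by
  intro k₁ k₂ hk v hv1 hv2
  have hsum : ∀ x : V, ∑ s ∈ (b.repr x).support, (b.repr x) s • b s = x := by
    intro x
    conv_rhs => rw [← b.linearCombination_repr x]
    rw [Finsupp.linearCombination_apply, Finsupp.sum]
  have hv : v = fun t => ∑ s ∈ (b.repr (v t)).support, (b.repr (v t)) s • b s := by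
    funext t; rw [hsum]
  rw [hv, MultilinearMap.map_sum_finset]
  apply Finset.sum_eq_zero
  intro r hr
  rw [MultilinearMap.map_smul_univ]
  have hz : f (fun t => b (r t)) = 0 := by
    by_contra hfz
    have h1 : Connected b f i (r k₁) := by
      have := (Module.Basis.mem_span_image b).1 hv1
      exact this (by simpa using (Fintype.mem_piFinset.1 hr) k₁)
    have h3 : Connected b f j (r k₂) := by
      have := (Module.Basis.mem_span_image b).1 hv2
      exact this (by simpa using (Fintype.mem_piFinset.1 hr) k₂)
    have h2 := connected_of_ne_zero hm b f k₁ k₂ r hfz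
    exact h (connected_trans b f h1 (connected_trans b f h2 (connected_symm hm b f h3)))
  rw [hz, smul_zero]
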